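/- Let $q$ be a prime power, $n \geq 1$ with $\gcd(n, q) = 1$, $d \mid n$, and $\mu \in \mathbb{F}_q^\times$. Let $\zeta_n$ be a primitive $n$-th root of unity in $\overline{\mathbb{F}}_q$ and $\mu^{1/d}$ a $d$-th root of $\mu$ in $\overline{\mathbb{F}}_q$. Then $[\mathbb{F}_q(\zeta_n, \mu^{1/d}) : \mathbb{F}_q] = \dfrac{\mathrm{ord}_n(q) \cdot d}{\gcd(\mathrm{ind}_{\mathbb{F}_q(\zeta_n)^\times}(\mu),\ d)}$, where $\mathrm{ind}_{G}(\mu)$ denotes the index of the cyclic subgroup generated by $\mu$ in the cyclic group $G$, i.e., $\mathrm{ind}_{\mathbb{F}_q(\zeta_n)^\times}(\mu) = (q^{\mathrm{ord}_n(q)} - 1)/\mathrm{ord}(\mu)$. -/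

import Mathlib

/-- Characterization: `c ∣ q ^ j - 1` iff the order of `q` mod `c` divides `j`. -/
lemma aux_ord_dvd_iff {q c : ℕ} (hq : 1 ≤ q) (hc : c ≠ 0) (j : ℕ) :
    c ∣ q ^ j - 1 ↔ orderOf ((q : ZMod c)) ∣ j := by
  haveI : NeZero c := ⟨hc⟩
  have h1 : ((q : ZMod c)) ^ j = ((q ^ j - 1 : ℕ) : ZMod c) + 1 := by
    rw [← Nat.cast_pow, ← Nat.cast_one (R := ZMod c), ← Nat.cast_add,
      Nat.sub_add_cancel (Nat.one_le_pow _ _ hq)]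
  rw [orderOf_dvd_iff_pow_eq_one, h1, add_eq_right,
    ZMod.natCast_eq_zero_iff]

lemma aux_binom (x : ℤ) (c : ℕ) : ∃ X : ℤ, (1 + x) ^ c = 1 + c * x + x ^ 2 * X := by
  induction c with
  | zero => exact ⟨0, by ring⟩
  | succ c ih =>
      obtain ⟨X, hX⟩ := ih
      refine ⟨X + c + x * X, ?_⟩
      rw [pow_succ, hX]
      push_cast
      ring

lemma aux_dvd_mul_iff (a b c : ℕ) (ha : a ≠ 0) :
    a ∣ c * b ↔ a / Nat.gcd a b ∣ c := by
  set g := Nat.gcd a b with hg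
  have hgpos : 0 < g := Nat.gcd_pos_of_pos_left _ (Nat.pos_of_ne_zero ha)
  have hco : Nat.Coprime (a / g) (b / g) := Nat.coprime_div_gcd_div_gcd hgpos
  have h1 : a = g * (a / g) := (Nat.mul_div_cancel' (Nat.gcd_dvd_left a b)).symm
  have h2 : b = g * (b / g) := (Nat.mul_div_cancel' (Nat.gcd_dvd_right a b)).symm
  constructor
  · intro h
    have h3 : g * (a / g) ∣ g * (c * (b / g)) := by
      rw [← h1, show g * (c * (b / g)) = c * (g * (b / g)) by ring, ← h2]
      exact h
    exact hco.dvd_of_dvd_mul_right ((Nat.mul_dvd_mul_iff_left hgpos).mp h3)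
  · intro h
    have := Nat.mul_dvd_mul h (Nat.gcd_dvd_right a b)
    rwa [Nat.div_mul_cancel (Nat.gcd_dvd_left a b)] at this

lemma aux_gcd_id {r g d s : ℕ} (hd : d ∣ r * g) (hs : Nat.gcd (r * s) d = s) :
    s * Nat.gcd g d = d * Nat.gcd s g := by
  have hsd : s ∣ d := hs ▸ Nat.gcd_dvd_right (r * s) d
  have h1 : d * Nat.gcd s g = Nat.gcd (d * s) (d * g) := (Nat.gcd_mul_left d s g).symm
  have h2 : s * Nat.gcd g d = Nat.gcd (s * g) (s * d) := (Nat.gcd_mul_left s g d).symm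
  rw [h1, h2]
  apply Nat.dvd_antisymm
  · -- gcd (s*g) (s*d) ∣ gcd (d*s) (d*g)
    apply Nat.dvd_gcd
    · exact (Nat.gcd_dvd_right _ _).trans (by rw [Nat.mul_comm s d])
    · exact (Nat.gcd_dvd_left _ _).trans (Nat.mul_dvd_mul_right hsd g)
  · -- gcd (d*s) (d*g) ∣ gcd (s*g) (s*d)
    apply Nat.dvd_gcd
    · -- ∣ s * g : via gcd (r*g*s) (d*g) = g * gcd (r*s) d = g * s
      have hds : d * s ∣ r * g * s := Nat.mul_dvd_mul_right hd s
      have : Nat.gcd (d * s) (d * g) ∣ Nat.gcd (r * g * s) (d * g) :=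
        Nat.dvd_gcd ((Nat.gcd_dvd_left _ _).trans hds) (Nat.gcd_dvd_right _ _)
      have h4 : Nat.gcd (r * g * s) (d * g) = g * s := by
        rw [show r * g * s = g * (r * s) by ring, show d * g = g * d by ring,
          Nat.gcd_mul_left, hs]
      rw [h4] at this
      exact this.trans (by rw [Nat.mul_comm g s])
    · exact (Nat.gcd_dvd_left _ _).trans (by rw [Nat.mul_comm d s])

/-- The key number-theoretic lemma. -/
lemma aux_nt {q k d r t : ℕ} (hQ : 1 ≤ q ^ k - 1) (hq : 1 ≤ q) (ht : 1 ≤ t)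
    (hdQ : d ∣ q ^ k - 1) (hrQ : r ∣ q ^ k - 1)
    (hts : t = r * Nat.gcd t d) :
    Nat.lcm k (orderOf ((q : ZMod t))) = k * d / Nat.gcd ((q ^ k - 1) / r) d := by
  set Q := q ^ k - 1 with hQdef
  set s := Nat.gcd t d with hsdef
  set g := Q / r with hgdef
  have hrg : Q = r * g := (Nat.mul_div_cancel' hrQ).symm
  have hr1 : 1 ≤ r := by
    rcases Nat.eq_zero_or_pos r with h | h
    · rw [h, zero_mul] at hts; omega
    · exact h
  have hg1 : 1 ≤ g := by
    rcases Nat.eq_zero_or_pos g with h | h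
    · rw [h, mul_zero] at hrg; omega
    · exact h
  have hsd : s ∣ d := Nat.gcd_dvd_right t d
  have htQ2 : t ∣ Q * Q := by
    calc t = r * s := hts
    _ ∣ r * d := Nat.mul_dvd_mul_left r hsd
    _ ∣ Q * Q := Nat.mul_dvd_mul hrQ hdQ
  -- the gcd identity
  have hgcdid : s * Nat.gcd g d = d * Nat.gcd s g :=
    aux_gcd_id (hrg ▸ hdQ) (by rw [← hts])
  have hgd_pos : 0 < Nat.gcd g d := Nat.gcd_pos_of_pos_left _ hg1
  have hsg_pos : 0 < Nat.gcd s g := Nat.gcd_pos_of_pos_right _ hg1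
  have hdiv_eq : s / Nat.gcd s g = d / Nat.gcd g d := by
    have e1 : s / Nat.gcd s g = s * Nat.gcd g d / (Nat.gcd s g * Nat.gcd g d) := by
      rw [Nat.mul_div_mul_right _ _ hgd_pos]
    have e2 : d / Nat.gcd g d = d * Nat.gcd s g / (Nat.gcd g d * Nat.gcd s g) := by
      rw [Nat.mul_div_mul_right _ _ hsg_pos]
    rw [e1, e2, hgcdid, Nat.mul_comm (Nat.gcd s g) (Nat.gcd g d)]
  set e := d / Nat.gcd g d with hedef
  -- key characterization
  have key : ∀ c : ℕ, (t ∣ q ^ (k * c) - 1) ↔ e ∣ c := by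
    intro c
    have hqk : (q : ℤ) ^ k = (Q : ℤ) + 1 := by
      have : Q + 1 = q ^ k := Nat.sub_add_cancel (Nat.one_le_pow _ _ hq)
      exact_mod_cast this.symm
    obtain ⟨X, hX⟩ := aux_binom (Q : ℤ) c
    have hcast : ((q ^ (k * c) - 1 : ℕ) : ℤ) = (c : ℤ) * Q + Q ^ 2 * X := by
      rw [Nat.cast_sub (Nat.one_le_pow _ _ hq)]
      push_cast
      rw [pow_mul, hqk, add_comm ((Q : ℤ)) 1, hX]
      ring
    have step1 : t ∣ q ^ (k * c) - 1 ↔ t ∣ c * Q := by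
      constructor
      · intro h
        have h' : (t : ℤ) ∣ ((q ^ (k * c) - 1 : ℕ) : ℤ) := Int.natCast_dvd_natCast.mpr h
        rw [hcast] at h'
        have hQ2 : (t : ℤ) ∣ (Q : ℤ) ^ 2 := by
          have := Int.natCast_dvd_natCast.mpr htQ2
          rwa [Nat.cast_mul, ← sq] at this
        have : (t : ℤ) ∣ (c : ℤ) * Q := (dvd_add_right (hQ2.mul_right X)).mp
          (by rwa [add_comm] at h')
        exact_mod_cast this
      · intro h
        have h' : (t : ℤ) ∣ (c : ℤ) * Q := by exact_mod_cast h
        have hQ2 : (t : ℤ) ∣ (Q : ℤ) ^ 2 := by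
          have := Int.natCast_dvd_natCast.mpr htQ2
          rwa [Nat.cast_mul, ← sq] at this
        have : (t : ℤ) ∣ ((q ^ (k * c) - 1 : ℕ) : ℤ) := by
          rw [hcast]; exact dvd_add h' (hQ2.mul_right X)
        exact_mod_cast this
    rw [step1, aux_dvd_mul_iff t Q c (by omega)]
    -- t / gcd t Q = e
    have hgcdtQ : Nat.gcd t Q = r * Nat.gcd s g := by
      rw [hts, hrg, Nat.gcd_mul_left]
    have : t / Nat.gcd t Q = e := by
      rw [hgcdtQ, hts, Nat.mul_div_mul_left _ _ hr1, hdiv_eq]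
    rw [this]
  -- conclude
  have hed : e ∣ d := Nat.div_dvd_of_dvd (Nat.gcd_dvd_right g d)
  have main : Nat.lcm k (orderOf ((q : ZMod t))) = k * e := by
    apply Nat.dvd_antisymm
    · apply Nat.lcm_dvd (Dvd.intro e rfl)
      rw [← aux_ord_dvd_iff hq (by omega : t ≠ 0), ← Nat.mul_comm e k, Nat.mul_comm e k]
      exact (key e).mpr dvd_rfl
    · obtain ⟨c, hc⟩ := Nat.dvd_lcm_left k (orderOf ((q : ZMod t)))
      have hjl : orderOf ((q : ZMod t)) ∣ k * c := hc ▸ Nat.dvd_lcm_right _ _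
      have htl : t ∣ q ^ (k * c) - 1 := (aux_ord_dvd_iff hq (by omega : t ≠ 0) _).mpr hjl
      have hec : e ∣ c := (key c).mp htl
      rw [hc]
      exact Nat.mul_dvd_mul_left k hec
  rw [main, hedef, Nat.mul_div_assoc k (Nat.gcd_dvd_right g d)]

theorem stmt_10 (F : Type*) [Field F] [Fintype F] (q n d : ℕ)
    (hq : Fintype.card F = q) (hn : 1 ≤ n) (hco : Nat.Coprime n q) (hd : d ∣ n)
    (μ : Fˣ) (ζ m : AlgebraicClosure F) (hζ : IsPrimitiveRoot ζ n)
    (hm : m ^ d = algebraMap F (AlgebraicClosure F) (μ : F)) :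
    Module.finrank F (IntermediateField.adjoin F {ζ, m} :
        IntermediateField F (AlgebraicClosure F)) =
      orderOf ((q : ZMod n)) * d /
        Nat.gcd ((q ^ orderOf ((q : ZMod n)) - 1) / orderOf μ) d := by
  classical
  have hq2 : 2 ≤ q := hq ▸ Fintype.one_lt_card
  set k := orderOf ((q : ZMod n)) with hkdef
  set K := IntermediateField.adjoin F {ζ, m} with hKdef
  have hζK : ζ ∈ K := IntermediateField.subset_adjoin F _ (by simp)
  have hmK : m ∈ K := IntermediateField.subset_adjoin F _ (by simp)
  haveI : FiniteDimensional F K :=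
    IntermediateField.finiteDimensional_adjoin
      (fun x _ => IsAlgebraic.isIntegral (Algebra.IsAlgebraic.isAlgebraic x))
  haveI : Finite K := Module.finite_of_finite F
  haveI : Fintype K := Fintype.ofFinite K
  set A := Module.finrank F (K : IntermediateField F (AlgebraicClosure F)) with hAdef
  have hcardK : Fintype.card K = q ^ A := by rw [← hq]; exact Module.card_eq_pow_finrank
  have hA1 : 1 ≤ A := Module.finrank_pos
  -- basic facts about d, μ, m
  have hd1 : 1 ≤ d := Nat.pos_of_dvd_of_pos hd hn
  set r := orderOf μ with hrdef
  have hr1 : 1 ≤ r := orderOf_pos μ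
  have hrq : r ∣ q - 1 := by
    have := orderOf_dvd_card (x := μ)
    rwa [Fintype.card_units, hq] at this
  have himg : orderOf (algebraMap F (AlgebraicClosure F) (μ : F)) = r := by
    rw [hrdef, ← orderOf_units]
    exact orderOf_injective ((algebraMap F (AlgebraicClosure F)) : F →* AlgebraicClosure F)
      (algebraMap F (AlgebraicClosure F)).injective _
  have hmdr : m ^ (d * r) = 1 := by
    rw [pow_mul, hm, ← map_pow, ← Units.val_pow_eq_pow_val, pow_orderOf_eq_one,
      Units.val_one, map_one]
  have hfin : IsOfFinOrder m :=
    isOfFinOrder_iff_pow_eq_one.mpr ⟨d * r, by positivity, hmdr⟩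
  set t := orderOf m with htdef
  have ht1 : 1 ≤ t := hfin.orderOf_pos
  have hts : t = r * Nat.gcd t d := by
    have h1 : orderOf (m ^ d) = t / Nat.gcd t d := orderOf_pow' m (by omega)
    rw [hm, himg] at h1
    have h2 : Nat.gcd t d ∣ t := Nat.gcd_dvd_left t d
    rw [h1, Nat.div_mul_cancel h2]
  -- characterizations
  have hcn : ∀ j, n ∣ q ^ j - 1 ↔ k ∣ j := fun j =>
    aux_ord_dvd_iff (by omega) (by omega) j
  have hct : ∀ j, t ∣ q ^ j - 1 ↔ orderOf ((q : ZMod t)) ∣ j := fun j =>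
    aux_ord_dvd_iff (by omega) (by omega) j
  set jm := orderOf ((q : ZMod t)) with hjmdef
  -- k ≥ 1
  have hk1 : 1 ≤ k := by
    have hu : ((ZMod.unitOfCoprime q hco.symm : (ZMod n)ˣ) : ZMod n) = (q : ZMod n) :=
      ZMod.coe_unitOfCoprime q hco.symm
    have h0 := orderOf_pos (ZMod.unitOfCoprime q hco.symm : (ZMod n)ˣ)
    rw [← orderOf_units, hu] at h0
    rw [hkdef]
    exact h0
  have hnQ : n ∣ q ^ k - 1 := (hcn k).mpr dvd_rfl
  have hQ1 : 1 ≤ q ^ k - 1 := by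
    have : 2 ≤ q ^ k := by
      calc 2 ≤ q := hq2
      _ = q ^ 1 := (pow_one q).symm
      _ ≤ q ^ k := Nat.pow_le_pow_right (by omega) hk1
    omega
  have hdQ : d ∣ q ^ k - 1 := hd.trans hnQ
  have hrQ : r ∣ q ^ k - 1 := by
    refine hrq.trans ?_
    rw [aux_ord_dvd_iff (by omega : 1 ≤ q) (by omega : q - 1 ≠ 0) k]
    have h1 : q - 1 ∣ q ^ 1 - 1 := by rw [pow_one]
    exact ((aux_ord_dvd_iff (by omega : 1 ≤ q) (by omega : q - 1 ≠ 0) 1).mp h1).trans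
      (one_dvd k)
  -- nonzero elements
  have hζ0 : ζ ≠ 0 := hζ.ne_zero (by omega)
  have hm0 : m ≠ 0 := by
    intro h
    rw [h, zero_pow (by positivity : d * r ≠ 0)] at hmdr
    exact zero_ne_one hmdr
  -- Direction 1 : lcm k jm ∣ A
  have hζA : ζ ^ (q ^ A - 1) = 1 := by
    have hne : (⟨ζ, hζK⟩ : K) ≠ 0 := by
      intro h; exact hζ0 (congrArg Subtype.val h)
    have := FiniteField.pow_card_sub_one_eq_one (⟨ζ, hζK⟩ : K) hne
    rw [hcardK] at this
    have := congrArg (Subtype.val : K → AlgebraicClosure F) this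
    simpa using this
  have hmA : m ^ (q ^ A - 1) = 1 := by
    have hne : (⟨m, hmK⟩ : K) ≠ 0 := by
      intro h; exact hm0 (congrArg Subtype.val h)
    have := FiniteField.pow_card_sub_one_eq_one (⟨m, hmK⟩ : K) hne
    rw [hcardK] at this
    have := congrArg (Subtype.val : K → AlgebraicClosure F) this
    simpa using this
  have hkA : k ∣ A := (hcn A).mp (hζ.dvd_of_pow_eq_one _ hζA)
  have hjmA : jm ∣ A := (hct A).mp (orderOf_dvd_of_pow_eq_one hmA)
  have hlcmA : Nat.lcm k jm ∣ A := Nat.lcm_dvd hkA hjmA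
  -- Direction 2 : A ∣ lcm k jm
  set L := Nat.lcm k jm with hLdef
  have hnL : n ∣ q ^ L - 1 := (hcn L).mpr (Nat.dvd_lcm_left _ _)
  have htL : t ∣ q ^ L - 1 := (hct L).mpr (Nat.dvd_lcm_right _ _)
  have hqL1 : 1 ≤ q ^ L := Nat.one_le_pow _ _ (by omega : 0 < q)
  have hζL : ζ ^ q ^ L = ζ := by
    have h1 : ζ ^ (q ^ L - 1) = 1 := (hζ.pow_eq_one_iff_dvd _).mpr hnL
    calc ζ ^ q ^ L = ζ ^ (q ^ L - 1 + 1) := by rw [Nat.sub_add_cancel hqL1]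
    _ = ζ ^ (q ^ L - 1) * ζ := pow_succ ζ _
    _ = ζ := by rw [h1, one_mul]
  have hmL : m ^ q ^ L = m := by
    have h1 : m ^ (q ^ L - 1) = 1 := orderOf_dvd_iff_pow_eq_one.mp htL
    calc m ^ q ^ L = m ^ (q ^ L - 1 + 1) := by rw [Nat.sub_add_cancel hqL1]
    _ = m ^ (q ^ L - 1) * m := pow_succ m _
    _ = m := by rw [h1, one_mul]
  -- Frobenius argument
  have H : ∀ x ∈ K, x ^ q ^ L = x := by
    set p := ringChar F with hpdef
    haveI : CharP F p := ringChar.charP F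
    obtain ⟨f, hp, hcard⟩ := FiniteField.card F p
    haveI : Fact p.Prime := ⟨hp⟩
    haveI : CharP (AlgebraicClosure F) p :=
      charP_of_injective_algebraMap (algebraMap F (AlgebraicClosure F)).injective p
    set ψ := iterateFrobenius (AlgebraicClosure F) p (f * L) with hψdef
    have hψ : ∀ x : AlgebraicClosure F, ψ x = x ^ q ^ L := by
      intro x
      rw [hψdef, iterateFrobenius_def, pow_mul, ← hcard, hq]
    intro x hx
    induction hx using IntermediateField.adjoin_induction with
    | mem x hx =>
        rcases hx with h | h
        · rw [h]; exact hζL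
        · rw [Set.mem_singleton_iff.mp h]; exact hmL
    | algebraMap x =>
        rw [← map_pow]
        congr 1
        rw [← hq]
        exact FiniteField.pow_card_pow L x
    | add x y hx hy ihx ihy =>
        rw [← hψ, map_add, hψ, hψ, ihx, ihy]
    | inv x hx ihx =>
        rw [← hψ, map_inv₀, hψ, ihx]
    | mul x y hx hy ihx ihy =>
        rw [mul_pow, ihx, ihy]
  -- generator of Kˣ
  obtain ⟨g, hg⟩ := IsCyclic.exists_generator (α := Kˣ)
  have hordg : orderOf g = q ^ A - 1 := by
    rw [orderOf_eq_card_of_forall_mem_zpowers hg]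
    rw [Nat.card_units, Nat.card_eq_fintype_card, hcardK]
  have hgpow : g ^ q ^ L = g := by
    have h1 : ((g : K) : AlgebraicClosure F) ^ q ^ L = ((g : K) : AlgebraicClosure F) :=
      H _ (g : K).2
    have h2 : (g : K) ^ q ^ L = (g : K) := by
      apply Subtype.ext
      simpa using h1
    exact Units.ext (by rw [Units.val_pow_eq_pow_val]; exact h2)
  have hgone : g ^ (q ^ L - 1) = 1 := by
    apply mul_right_cancel (b := g)
    rw [one_mul, ← pow_succ, Nat.sub_add_cancel hqL1, hgpow]
  have hdvdpow : q ^ A - 1 ∣ q ^ L - 1 := hordg ▸ orderOf_dvd_of_pow_eq_one hgone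
  have hQA1 : q ^ A - 1 ≠ 0 := by
    have : 2 ≤ q ^ A := by
      calc 2 ≤ q := hq2
      _ = q ^ 1 := (pow_one q).symm
      _ ≤ q ^ A := Nat.pow_le_pow_right (by omega) hA1
    omega
  have hAL : A ∣ L := by
    set o := orderOf ((q : ZMod (q ^ A - 1))) with hodef
    have hoA : o ∣ A := (aux_ord_dvd_iff (by omega : 1 ≤ q) hQA1 A).mp dvd_rfl
    have hoL : o ∣ L := (aux_ord_dvd_iff (by omega : 1 ≤ q) hQA1 L).mp hdvdpow
    have ho1 : 1 ≤ o := by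
      rcases Nat.eq_zero_or_pos o with h | h
      · rw [h] at hoA; omega
      · exact h
    have hoeq : o = A := by
      by_contra hne
      have holt : o < A := lt_of_le_of_ne (Nat.le_of_dvd (by omega) hoA) hne
      have h1 : q ^ A - 1 ∣ q ^ o - 1 :=
        (aux_ord_dvd_iff (by omega : 1 ≤ q) hQA1 o).mpr dvd_rfl
      have h2 : 1 ≤ q ^ o - 1 := by
        have : 2 ≤ q ^ o := by
          calc 2 ≤ q := hq2
          _ = q ^ 1 := (pow_one q).symm
          _ ≤ q ^ o := Nat.pow_le_pow_right (by omega) ho1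
        omega
      have h3 : q ^ o < q ^ A := Nat.pow_lt_pow_right (by omega) holt
      have := Nat.le_of_dvd (by omega) h1
      omega
    exact hoeq ▸ hoL
  -- conclude
  have hAeq : A = Nat.lcm k jm := Nat.dvd_antisymm hAL hlcmA
  rw [hAeq]
  exact aux_nt hQ1 (by omega) ht1 hdQ hrQ hts
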